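/- Let A and B be n×n real symmetric positive semidefinite matrices. Then the determinantal rank of the matrix pencil ⟨A,B⟩, defined as max over k ∈ ℝ of rank(A + kB), equals rank(A + B). -/

import Mathlib

open Matrix

lemma ker_add_le_ker {n : ℕ} {A B : Matrix (Fin n) (Fin n) ℝ}
    (hA : A.PosSemidef) (hB : B.PosSemidef) (k : ℝ) :
    LinearMap.ker (A + B).mulVecLin ≤ LinearMap.ker (A + k • B).mulVecLin := by
  intro x hx
  simp only [LinearMap.mem_ker, mulVecLin_apply, add_mulVec] at hx ⊢
  have hdot : star x ⬝ᵥ A *ᵥ x + star x ⬝ᵥ B *ᵥ x = 0 := by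
    rw [← dotProduct_add, hx, dotProduct_zero]
  have hAx : A *ᵥ x = 0 := by
    rw [← hA.dotProduct_mulVec_zero_iff]
    have h1 := hA.dotProduct_mulVec_nonneg x
    have h2 := hB.dotProduct_mulVec_nonneg x
    linarith
  have hBx : B *ᵥ x = 0 := by
    have := hx
    rw [hAx, zero_add] at this
    exact this
  rw [hAx, smul_mulVec, hBx, smul_zero, add_zero]

/-- The determinantal rank of the pencil ⟨A,B⟩, i.e. the maximum over k ∈ ℝ of
rank (A + k B), equals rank (A + B), for symmetric positive semidefinite A, B. -/
theorem determinantal_rank_eq_rank_add {n : ℕ} (A B : Matrix (Fin n) (Fin n) ℝ)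
    (hA : A.PosSemidef) (hB : B.PosSemidef) :
    (∀ k : ℝ, (A + k • B).rank ≤ (A + B).rank) ∧
      (∃ k : ℝ, (A + k • B).rank = (A + B).rank) := by
  constructor
  · intro k
    have hker := ker_add_le_ker hA hB k
    have h1 := LinearMap.finrank_range_add_finrank_ker (A + B).mulVecLin
    have h2 := LinearMap.finrank_range_add_finrank_ker (A + k • B).mulVecLin
    have hle : Module.finrank ℝ (LinearMap.ker (A + B).mulVecLin)
        ≤ Module.finrank ℝ (LinearMap.ker (A + k • B).mulVecLin) :=
      Submodule.finrank_mono hker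
    simp only [Matrix.rank]
    omega
  · exact ⟨1, by rw [one_smul]⟩
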